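/- Let 1/2 < ρ < α < 1, c = ρ(1−ρ), λ₁ = ρ/(1−ρ). The function I : (0,1) → ℝ given by I(z) = z log(z/α) + (1−z)log((1−z)/(1−α)) + log(α(1−α)/(ρ(1−ρ))) for 0 < z ≤ 1−α, I(z) = 2[z log z + (1−z)log(1−z)] − log(ρ(1−ρ)) for 1−α < z ≤ 1−ρ, and I(z) = z log(z/ρ) + (1−z)log((1−z)/(1−ρ)) for 1−ρ < z < 1, is convex, nonnegative, and has a unique zero at z = ρ. -/
import Mathlib

open Real

noncomputable def Lf (t z : ℝ) : ℝ := z * Real.log t + (1 - z) * Real.log (1 - t)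
noncomputable def entf (z : ℝ) : ℝ := z * Real.log z + (1 - z) * Real.log (1 - z)

lemma tangent_le {t z : ℝ} (ht0 : 0 < t) (ht1 : t < 1) (hz0 : 0 < z) (hz1 : z < 1) :
    Lf t z ≤ entf z := by
  have hz1' : (0:ℝ) < 1 - z := by linarith
  have ht1' : (0:ℝ) < 1 - t := by linarith
  have h1 : z * (Real.log t - Real.log z) ≤ t - z := by
    have h := Real.log_le_sub_one_of_pos (show 0 < t / z by positivity)
    rw [Real.log_div ht0.ne' hz0.ne'] at h
    have h2 := mul_le_mul_of_nonneg_left h hz0.le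
    have h3 : z * (t / z - 1) = t - z := by field_simp
    linarith
  have h2 : (1 - z) * (Real.log (1 - t) - Real.log (1 - z)) ≤ (1 - t) - (1 - z) := by
    have h := Real.log_le_sub_one_of_pos (show 0 < (1 - t) / (1 - z) by positivity)
    rw [Real.log_div ht1'.ne' hz1'.ne'] at h
    have h2 := mul_le_mul_of_nonneg_left h hz1'.le
    have h3 : (1 - z) * ((1 - t) / (1 - z) - 1) = (1 - t) - (1 - z) := by field_simp
    linarith
  unfold Lf entf
  nlinarith [h1, h2]

lemma tangent_lt {t z : ℝ} (ht0 : 0 < t) (ht1 : t < 1) (hz0 : 0 < z) (hz1 : z < 1)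
    (hne : t ≠ z) : Lf t z < entf z := by
  have hz1' : (0:ℝ) < 1 - z := by linarith
  have ht1' : (0:ℝ) < 1 - t := by linarith
  have h1 : z * (Real.log t - Real.log z) < t - z := by
    have hne' : t / z ≠ 1 := by
      intro h
      exact hne (by field_simp at h; linarith)
    have h := Real.log_lt_sub_one_of_pos (show 0 < t / z by positivity) hne'
    rw [Real.log_div ht0.ne' hz0.ne'] at h
    have h2 := mul_lt_mul_of_pos_left h hz0
    have h3 : z * (t / z - 1) = t - z := by field_simp
    linarith
  have h2 : (1 - z) * (Real.log (1 - t) - Real.log (1 - z)) ≤ (1 - t) - (1 - z) := by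
    have h := Real.log_le_sub_one_of_pos (show 0 < (1 - t) / (1 - z) by positivity)
    rw [Real.log_div ht1'.ne' hz1'.ne'] at h
    have h2 := mul_le_mul_of_nonneg_left h hz1'.le
    have h3 : (1 - z) * ((1 - t) / (1 - z) - 1) = (1 - t) - (1 - z) := by field_simp
    linarith
  unfold Lf entf
  nlinarith [h1, h2]

lemma L_le_piece {a b t z : ℝ} (ha : 0 < a) (hb : b < 1) (hat : a ≤ t) (htb : t ≤ b)
    (hz0 : 0 < z) (hz1 : z < 1) :
    Lf t z ≤ if z ≤ a then Lf a z else if z ≤ b then entf z else Lf b z := by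
  have ht0 : 0 < t := lt_of_lt_of_le ha hat
  have ht1 : t < 1 := lt_of_le_of_lt htb hb
  have ha1 : a < 1 := lt_of_le_of_lt (hat.trans htb) hb
  have hb0 : 0 < b := ha.trans_le (hat.trans htb)
  split_ifs with h1 h2
  · have e1 : Lf a z = entf a + (Real.log a - Real.log (1-a)) * (z - a) := by
      unfold Lf entf; ring
    have e2 : Lf t z = Lf t a + (Real.log t - Real.log (1-t)) * (z - a) := by
      unfold Lf; ring
    have e3 : Lf t a ≤ entf a := tangent_le ht0 ht1 ha ha1
    have hl1 : Real.log a ≤ Real.log t := Real.log_le_log ha hat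
    have hl2 : Real.log (1-t) ≤ Real.log (1-a) := Real.log_le_log (by linarith) (by linarith)
    have h4 : 0 ≤ (Real.log a - Real.log (1-a)) * (z-a) - (Real.log t - Real.log (1-t)) * (z-a) := by
      have e : (Real.log a - Real.log (1-a)) * (z-a) - (Real.log t - Real.log (1-t)) * (z-a)
          = ((Real.log t - Real.log (1-t)) - (Real.log a - Real.log (1-a))) * (a - z) := by ring
      rw [e]
      exact mul_nonneg (by linarith) (by linarith)
    linarith
  · exact tangent_le ht0 ht1 hz0 hz1
  · have hzb : b ≤ z := le_of_not_ge h2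
    have e1 : Lf b z = entf b + (Real.log b - Real.log (1-b)) * (z - b) := by
      unfold Lf entf; ring
    have e2 : Lf t z = Lf t b + (Real.log t - Real.log (1-t)) * (z - b) := by
      unfold Lf; ring
    have e3 : Lf t b ≤ entf b := tangent_le ht0 ht1 hb0 hb
    have hl1 : Real.log t ≤ Real.log b := Real.log_le_log ht0 htb
    have hl2 : Real.log (1-b) ≤ Real.log (1-t) := Real.log_le_log (by linarith) (by linarith)
    have h4 : 0 ≤ (Real.log b - Real.log (1-b)) * (z-b) - (Real.log t - Real.log (1-t)) * (z-b) := by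
      have e : (Real.log b - Real.log (1-b)) * (z-b) - (Real.log t - Real.log (1-t)) * (z-b)
          = ((Real.log b - Real.log (1-b)) - (Real.log t - Real.log (1-t))) * (z - b) := by ring
      rw [e]
      exact mul_nonneg (by linarith) (by linarith)
    linarith

lemma convexOn_of_support {s : Set ℝ} (hs : Convex ℝ s) (f : ℝ → ℝ)
    (h : ∀ p ∈ s, ∃ m : ℝ, ∀ z ∈ s, f p + m * (z - p) ≤ f z) :
    ConvexOn ℝ s f := by
  refine ⟨hs, fun x hx y hy u v hu hv huv => ?_⟩
  obtain ⟨m, hm⟩ := h (u • x + v • y) (hs hx hy hu hv huv)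
  have h1 := hm x hx
  have h2 := hm y hy
  simp only [smul_eq_mul] at *
  have key : u * (f (u*x+v*y) + m * (x - (u*x+v*y))) + v * (f (u*x+v*y) + m * (y - (u*x+v*y)))
      = f (u*x+v*y) := by
    have hu1 : u = 1 - v := by linarith
    subst hu1
    ring
  have h3 := mul_le_mul_of_nonneg_left h1 hu
  have h4 := mul_le_mul_of_nonneg_left h2 hv
  linarith

open Real in
theorem stmt_17 (ρ α : ℝ) (hρ : 1 / 2 < ρ) (hρα : ρ < α) (hα : α < 1)
    (I : ℝ → ℝ)
    (hI : ∀ z : ℝ, I z =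
      if z ≤ 1 - α then
        z * log (z / α) + (1 - z) * log ((1 - z) / (1 - α)) + log (α * (1 - α) / (ρ * (1 - ρ)))
      else if z ≤ 1 - ρ then
        2 * (z * log z + (1 - z) * log (1 - z)) - log (ρ * (1 - ρ))
      else
        z * log (z / ρ) + (1 - z) * log ((1 - z) / (1 - ρ))) :
    ConvexOn ℝ (Set.Ioo (0 : ℝ) 1) I ∧
      (∀ z ∈ Set.Ioo (0 : ℝ) 1, 0 ≤ I z) ∧
      I ρ = 0 ∧
      (∀ z ∈ Set.Ioo (0 : ℝ) 1, I z = 0 → z = ρ) := by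
  have hα0 : 0 < α := by linarith
  have hρ0 : 0 < ρ := by linarith
  have hρ1 : ρ < 1 := by linarith
  have ha0 : (0:ℝ) < 1 - α := by linarith
  have hb0 : (0:ℝ) < 1 - ρ := by linarith
  have hb1 : (1:ℝ) - ρ < 1 := by linarith
  have hab : (1:ℝ) - α ≤ 1 - ρ := by linarith
  have hbρ : (1:ℝ) - ρ < ρ := by linarith
  have haρ : (1:ℝ) - α < ρ := by linarith
  have hC : Real.log (ρ * (1 - ρ)) = Real.log ρ + Real.log (1 - ρ) :=
    Real.log_mul hρ0.ne' hb0.ne'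
  -- the decomposition I = entf + N - log ρ - log (1-ρ)
  have hIJ : ∀ z : ℝ, 0 < z → z < 1 → I z =
      entf z + (if z ≤ 1 - α then Lf (1-α) z else if z ≤ 1 - ρ then entf z else Lf (1-ρ) z)
        - (Real.log ρ + Real.log (1 - ρ)) := by
    intro z hz0 hz1
    have hz1' : (0:ℝ) < 1 - z := by linarith
    rw [hI z]
    split_ifs with h1 h2
    · rw [Real.log_div hz0.ne' hα0.ne', Real.log_div hz1'.ne' ha0.ne',
        Real.log_div (by positivity : (0:ℝ) < α * (1 - α)).ne'
          (by positivity : (0:ℝ) < ρ * (1 - ρ)).ne',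
        Real.log_mul hα0.ne' ha0.ne', hC]
      unfold entf Lf
      rw [show (1:ℝ) - (1 - α) = α by ring]
      ring
    · rw [hC]
      unfold entf
      ring
    · rw [Real.log_div hz0.ne' hρ0.ne', Real.log_div hz1'.ne' hb0.ne']
      unfold entf Lf
      rw [show (1:ℝ) - (1 - ρ) = ρ by ring]
      ring
  -- sum of the two reference tangent lines is the constant
  have hLL : ∀ z : ℝ, Lf ρ z + Lf (1-ρ) z = Real.log ρ + Real.log (1 - ρ) := by
    intro z
    unfold Lf
    rw [show (1:ℝ) - (1 - ρ) = ρ by ring]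
    ring
  -- I z as sum of two nonnegative pieces
  have hdecomp : ∀ z : ℝ, 0 < z → z < 1 → I z =
      (entf z - Lf ρ z) +
      ((if z ≤ 1 - α then Lf (1-α) z else if z ≤ 1 - ρ then entf z else Lf (1-ρ) z)
        - Lf (1-ρ) z) := by
    intro z hz0 hz1
    have := hIJ z hz0 hz1
    have := hLL z
    linarith
  have hpiece : ∀ z : ℝ, 0 < z → z < 1 →
      Lf (1-ρ) z ≤ (if z ≤ 1 - α then Lf (1-α) z else if z ≤ 1 - ρ then entf z else Lf (1-ρ) z) :=
    fun z hz0 hz1 => L_le_piece ha0 hb1 hab le_rfl hz0 hz1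
  have hIρ : I ρ = 0 := by
    rw [hI ρ, if_neg (by linarith), if_neg (by linarith), div_self hρ0.ne',
      div_self hb0.ne', Real.log_one]
    ring
  refine ⟨?_, ?_, hIρ, ?_⟩
  · -- convexity via supporting lines
    apply convexOn_of_support (convex_Ioo 0 1)
    have main : ∀ t : ℝ, 1 - α ≤ t → t ≤ 1 - ρ → ∀ p : ℝ, 0 < p → p < 1 →
        (if p ≤ 1 - α then Lf (1-α) p else if p ≤ 1 - ρ then entf p else Lf (1-ρ) p) = Lf t p →
        ∀ z ∈ Set.Ioo (0:ℝ) 1,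
          I p + ((Real.log p - Real.log (1-p)) + (Real.log t - Real.log (1-t))) * (z - p) ≤ I z := by
      intro t hta htb p hp0 hp1 hNp z hz
      obtain ⟨hz0, hz1⟩ := hz
      have h1 : Lf p z ≤ entf z := tangent_le hp0 hp1 hz0 hz1
      have h2 : Lf t z ≤ (if z ≤ 1 - α then Lf (1-α) z else if z ≤ 1 - ρ then entf z else Lf (1-ρ) z) :=
        L_le_piece ha0 hb1 hta htb hz0 hz1
      have e1 : Lf p z = entf p + (Real.log p - Real.log (1-p)) * (z - p) := by
        unfold Lf entf; ring
      have e2 : Lf t z = Lf t p + (Real.log t - Real.log (1-t)) * (z - p) := by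
        unfold Lf; ring
      have hJz := hIJ z hz0 hz1
      have hJp := hIJ p hp0 hp1
      rw [hNp] at hJp
      linarith
    intro p hp
    obtain ⟨hp0, hp1⟩ := hp
    by_cases hpa : p ≤ 1 - α
    · exact ⟨_, main (1-α) le_rfl hab p hp0 hp1 (if_pos hpa) ⟩
    · by_cases hpb : p ≤ 1 - ρ
      · refine ⟨_, main p (by linarith) hpb p hp0 hp1 ?_⟩
        rw [if_neg hpa, if_pos hpb]
        unfold Lf entf; ring
      · exact ⟨_, main (1-ρ) hab le_rfl p hp0 hp1 (by rw [if_neg hpa, if_neg hpb])⟩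
  · -- nonnegativity
    intro z hz
    obtain ⟨hz0, hz1⟩ := hz
    have h1 : Lf ρ z ≤ entf z := tangent_le hρ0 hρ1 hz0 hz1
    have h2 := hpiece z hz0 hz1
    have h3 := hdecomp z hz0 hz1
    linarith
  · -- unique zero
    intro z hz hIz
    obtain ⟨hz0, hz1⟩ := hz
    by_contra hne
    have h1 : Lf ρ z < entf z := tangent_lt hρ0 hρ1 hz0 hz1 (fun h => hne h.symm)
    have h2 := hpiece z hz0 hz1
    have h3 := hdecomp z hz0 hz1
    linarith
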